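/- arXiv:1106.5527 — 3 statements merged into one kernel-verified Lean document; each statement's English description precedes it below -/
import Mathlib

section
/- Let ρ : ℝ² → [0,∞) be measurable with ρ(x) ≤ A + B·ln_−|x−ξ| for all x, where A, B ≥ 0 and ξ ∈ ℝ². Then for every x ∈ ℝ² and δ ∈ (0,1), ∫_{|x−y| ≤ δ} ρ(y)/|x−y| dy ≤ C(A δ + B δ(1 + |ln δ|)) for an absolute constant C. -/
open MeasureTheory Measure Set Metric
open scoped ENNReal

noncomputable def lnm (r : ℝ) : ℝ := max (-Real.log r) 0

namespace CoulombAux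

lemma measurable_lnm : Measurable lnm := Real.measurable_log.neg.max measurable_const

lemma lnm_nonneg (r : ℝ) : 0 ≤ lnm r := le_max_right _ _

lemma lnm_anti {a b : ℝ} (ha : 0 < a) (hab : a ≤ b) : lnm b ≤ lnm a :=
  max_le_max (neg_le_neg (Real.log_le_log ha hab)) le_rfl

local notation "E2" => EuclideanSpace ℝ (Fin 2)

lemma lintegral_norm_eq (f : ℝ → ℝ≥0∞) (hf : Measurable f) :
    ∫⁻ x : E2, f ‖x‖ =
      2 * volume (ball (0:E2) 1) * ∫⁻ y in Ioi (0:ℝ), ENNReal.ofReal y * f y := by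
  have hdim : Module.finrank ℝ E2 = 2 := by simp [finrank_euclideanSpace]
  calc ∫⁻ x : E2, f ‖x‖
      = ∫⁻ x in ({0}ᶜ : Set E2), f ‖x‖ := by rw [MeasureTheory.restrict_compl_singleton]
    _ = ∫⁻ x : (({0}ᶜ : Set E2)), f ‖(x : E2)‖ ∂((volume : Measure E2).comap (↑)) :=
        (lintegral_subtype_comap (measurableSet_singleton 0).compl _).symm
    _ = ∫⁻ p : sphere (0:E2) 1 × Ioi (0:ℝ), f p.2
          ∂((volume : Measure E2).toSphere.prod (Measure.volumeIoiPow (Module.finrank ℝ E2 - 1))) := by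
        rw [← (volume : Measure E2).measurePreserving_homeomorphUnitSphereProd.lintegral_comp
          (f := fun p : sphere (0:E2) 1 × Ioi (0:ℝ) => f p.2)
          (hf.comp (measurable_subtype_coe.comp measurable_snd))]
        simp only [homeomorphUnitSphereProd_apply_snd_coe]
    _ = (volume : Measure E2).toSphere univ *
          ∫⁻ y : Ioi (0:ℝ), f y ∂(Measure.volumeIoiPow (Module.finrank ℝ E2 - 1)) := by
        rw [lintegral_prod (fun p : sphere (0:E2) 1 × Ioi (0:ℝ) => f p.2)
          ((hf.comp (measurable_subtype_coe.comp measurable_snd)).aemeasurable)]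
        simp [lintegral_const, mul_comm]
    _ = 2 * volume (ball (0:E2) 1) * ∫⁻ y in Ioi (0:ℝ), ENNReal.ofReal y * f y := by
        have h2 : ∫⁻ y : Ioi (0:ℝ), f y ∂(Measure.volumeIoiPow (Module.finrank ℝ E2 - 1))
            = ∫⁻ y in Ioi (0:ℝ), ENNReal.ofReal y * f y := by
          rw [Measure.volumeIoiPow,
            lintegral_withDensity_eq_lintegral_mul _
              (f := fun r : Ioi (0:ℝ) => ENNReal.ofReal ((r:ℝ) ^ (Module.finrank ℝ E2 - 1)))
              ((measurable_subtype_coe.pow_const _).ennreal_ofReal)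
              (show Measurable fun y : Ioi (0:ℝ) => f (y:ℝ) from hf.comp measurable_subtype_coe)]
          rw [← lintegral_subtype_comap measurableSet_Ioi
            (fun y => ENNReal.ofReal y * f y)]
          congr 1
          ext y
          simp [hdim, pow_one]
        rw [h2, Measure.toSphere_apply_univ, hdim]
        norm_num

lemma ball_polar (x : E2) {δ : ℝ} (hδ : 0 < δ) (f : ℝ → ℝ≥0∞) (hf : Measurable f) :
    ∫⁻ y in closedBall x δ, f ‖x - y‖ =
      2 * volume (ball (0:E2) 1) * ∫⁻ y in Ioc (0:ℝ) δ, ENNReal.ofReal y * f y := by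
  have hpre : closedBall x δ = (fun y : E2 => x - y) ⁻¹' closedBall 0 δ := by
    ext y
    simp [mem_closedBall, dist_eq_norm, norm_sub_rev x y, dist_comm]
  set fδ : ℝ → ℝ≥0∞ := fun r => if r ≤ δ then f r else 0 with hfδ
  have hfδm : Measurable fδ := Measurable.ite measurableSet_Iic hf measurable_const
  have step1 : ∫⁻ y in closedBall x δ, f ‖x - y‖ = ∫⁻ z in closedBall (0:E2) δ, f ‖z‖ := by
    rw [hpre]
    exact (measurePreserving_sub_left volume x).setLIntegral_comp_preimage
      measurableSet_closedBall (hf.comp measurable_norm)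
  have step2 : ∫⁻ z in closedBall (0:E2) δ, f ‖z‖ = ∫⁻ z : E2, fδ ‖z‖ := by
    rw [← lintegral_indicator measurableSet_closedBall]
    congr 1
    ext z
    by_cases hz : z ∈ closedBall (0:E2) δ
    · rw [indicator_of_mem hz]
      rw [mem_closedBall_zero_iff] at hz
      simp [hfδ, hz]
    · rw [indicator_of_notMem hz]
      rw [mem_closedBall_zero_iff] at hz
      simp [hfδ, hz]
  have step3 : ∫⁻ y in Ioi (0:ℝ), ENNReal.ofReal y * fδ y
      = ∫⁻ y in Ioc (0:ℝ) δ, ENNReal.ofReal y * f y := by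
    rw [← Ioc_union_Ioi_eq_Ioi hδ.le,
      lintegral_union measurableSet_Ioi (Ioc_disjoint_Ioi le_rfl)]
    have h0 : ∫⁻ y in Ioi δ, ENNReal.ofReal y * fδ y = 0 := by
      rw [setLIntegral_congr_fun measurableSet_Ioi
        (fun y hy => ?_), lintegral_zero]
      have : ¬ y ≤ δ := not_le.mpr hy
      simp [hfδ, this]
    have h1 : ∫⁻ y in Ioc (0:ℝ) δ, ENNReal.ofReal y * fδ y
        = ∫⁻ y in Ioc (0:ℝ) δ, ENNReal.ofReal y * f y := by
      refine setLIntegral_congr_fun measurableSet_Ioc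
        (fun y hy => ?_)
      simp [hfδ, hy.2]
    rw [h0, h1, add_zero]
  rw [step1, step2, lintegral_norm_eq fδ hfδm, step3]

lemma lintegral_neg_log_le {δ : ℝ} (hδ : 0 < δ) (hδ1 : δ < 1) :
    ∫⁻ y in Ioc (0:ℝ) δ, ENNReal.ofReal (-Real.log y)
      ≤ ENNReal.ofReal (δ * (1 - Real.log δ)) := by
  set g : ℝ → ℝ≥0∞ := fun y => ENNReal.ofReal (-Real.log y) with hgdef
  have hg : Measurable g := Real.measurable_log.neg.ennreal_ofReal
  have hMnn : 0 ≤ δ * (1 - Real.log δ) := by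
    have := Real.log_nonpos hδ.le hδ1.le
    nlinarith
  have key : ∀ a : ℝ, 0 < a → ∫⁻ y in Ioc a δ, g y ≤ ENNReal.ofReal (δ * (1 - Real.log δ)) := by
    intro a ha
    rcases le_or_gt δ a with h | h
    · rw [Ioc_eq_empty (not_lt.mpr h)]
      simp
    · have hsub : Icc a δ ⊆ ({0}ᶜ : Set ℝ) := fun y hy => (ne_of_gt (lt_of_lt_of_le ha hy.1))
      have hcont : ContinuousOn (fun y : ℝ => -Real.log y) (Icc a δ) :=
        (Real.continuousOn_log.mono hsub).neg
      have hint : IntegrableOn (fun y : ℝ => -Real.log y) (Ioc a δ) :=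
        (hcont.integrableOn_Icc).mono_set Ioc_subset_Icc_self
      have hnn : 0 ≤ᵐ[volume.restrict (Ioc a δ)] fun y : ℝ => -Real.log y := by
        filter_upwards [ae_restrict_mem measurableSet_Ioc] with y hy
        have : Real.log y ≤ 0 := Real.log_nonpos (ha.trans hy.1).le (hy.2.trans hδ1.le)
        simp only [Pi.zero_apply]
        linarith
      rw [hgdef, ← ofReal_integral_eq_lintegral_ofReal hint hnn]
      apply ENNReal.ofReal_le_ofReal
      have h0 : (0:ℝ) ∉ Set.uIcc a δ := by
        rw [Set.uIcc_of_le h.le]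
        intro h0
        exact absurd h0.1 (not_le.mpr ha)
      have : ∫ y in Ioc a δ, -Real.log y = ∫ y in a..δ, -Real.log y := by
        rw [intervalIntegral.integral_of_le h.le]
      rw [this, intervalIntegral.integral_neg, integral_log]
      have hla : Real.log a ≤ 0 := Real.log_nonpos ha.le (h.le.trans hδ1.le)
      nlinarith
  calc ∫⁻ y in Ioc (0:ℝ) δ, g y
      = ∫⁻ y, (Ioc (0:ℝ) δ).indicator g y := (lintegral_indicator measurableSet_Ioc g).symm
    _ = ∫⁻ y, ⨆ n : ℕ, (Ioc (δ / (n+1)) δ).indicator g y := by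
        congr 1
        ext y
        by_cases hy : y ∈ Ioc (0:ℝ) δ
        · rw [indicator_of_mem hy]
          obtain ⟨n, hn⟩ := exists_nat_gt (δ / y)
          have hny : δ / (n+1) < y := by
            rw [div_lt_iff₀ (by positivity)]
            rw [div_lt_iff₀ hy.1] at hn
            nlinarith [hy.1]
          apply le_antisymm
          · refine le_trans (le_of_eq ?_) (le_iSup (fun n : ℕ => (Ioc (δ / (n+1)) δ).indicator g y) n)
            exact (indicator_of_mem (show y ∈ Ioc (δ / (n+1)) δ from ⟨hny, hy.2⟩) g).symm
          · refine iSup_le fun m => ?_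
            by_cases hm : y ∈ Ioc (δ / (m+1)) δ
            · rw [indicator_of_mem hm]
            · rw [indicator_of_notMem hm]; exact zero_le
        · rw [indicator_of_notMem hy]
          symm
          simp only [ENNReal.iSup_eq_zero]
          intro n
          apply indicator_of_notMem
          intro hmem
          exact hy ⟨lt_trans (by positivity) hmem.1, hmem.2⟩
    _ = ⨆ n : ℕ, ∫⁻ y, (Ioc (δ / (n+1)) δ).indicator g y := by
        refine lintegral_iSup (fun n => hg.indicator measurableSet_Ioc) ?_
        intro m n hmn
        refine indicator_le_indicator_of_subset (Ioc_subset_Ioc_left ?_) (fun _ => zero_le)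
        apply div_le_div_of_nonneg_left hδ.le (by positivity)
        exact_mod_cast add_le_add_left (Nat.cast_le.mpr hmn) 1
    _ ≤ ENNReal.ofReal (δ * (1 - Real.log δ)) := by
        refine iSup_le fun n => ?_
        rw [lintegral_indicator measurableSet_Ioc]
        exact key _ (by positivity)

end CoulombAux

theorem coulomb_kernel_bound_log_density :
    ∃ C > 0, ∀ (ρ : EuclideanSpace ℝ (Fin 2) → ℝ) (ξ : EuclideanSpace ℝ (Fin 2))
      (A B : ℝ), Measurable ρ → (∀ x, 0 ≤ ρ x) → 0 ≤ A → 0 ≤ B →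
      (∀ x, ρ x ≤ A + B * lnm ‖x - ξ‖) →
      ∀ (x : EuclideanSpace ℝ (Fin 2)) (δ : ℝ), 0 < δ → δ < 1 →
        ∫ y in Metric.closedBall x δ, ρ y / ‖x - y‖ ≤
          C * (A * δ + B * δ * (1 + |Real.log δ|)) := by
  classical
  set E2 := EuclideanSpace ℝ (Fin 2)
  set V : ℝ≥0∞ := volume (ball (0 : E2) 1) with hV
  have hV0 : V ≠ 0 := (measure_ball_pos _ _ one_pos).ne'
  have hVtop : V ≠ ⊤ := measure_ball_lt_top.ne
  set Vr : ℝ := V.toReal with hVrdef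
  have hVrpos : 0 < Vr := ENNReal.toReal_pos hV0 hVtop
  have hVof : V = ENNReal.ofReal Vr := (ENNReal.ofReal_toReal hVtop).symm
  have key2 : ∀ z : ℝ, 0 ≤ z → 2 * V * ENNReal.ofReal z = ENNReal.ofReal (2 * Vr * z) := by
    intro z hz
    rw [hVof, ENNReal.ofReal_mul (by positivity), ENNReal.ofReal_mul (by norm_num : (0:ℝ) ≤ 2),
      ENNReal.ofReal_ofNat]
  refine ⟨4 * Vr, by positivity, ?_⟩
  intro ρ ξ A B hρ hρ0 hA hB hbound x δ hδ hδ1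
  set S := Metric.closedBall x δ with hS
  set G : ℝ → ℝ := fun r => lnm r / r with hG
  have hGm : Measurable G := CoulombAux.measurable_lnm.div measurable_id
  have nm : Measurable fun y : E2 => ‖x - y‖ := (measurable_const.sub measurable_id).norm
  have nmξ : Measurable fun y : E2 => ‖y - ξ‖ := (measurable_id.sub measurable_const).norm
  set h1 : E2 → ℝ≥0∞ := fun y => ENNReal.ofReal (A / ‖x - y‖) with hh1
  set h2 : E2 → ℝ≥0∞ := fun y => ENNReal.ofReal (B * G ‖x - y‖) with hh2
  set h3 : E2 → ℝ≥0∞ :=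
    (closedBall ξ δ).indicator (fun y => ENNReal.ofReal (B * G ‖y - ξ‖)) with hh3
  have h1m : Measurable h1 := (measurable_const.div nm).ennreal_ofReal
  have h2m : Measurable h2 := (measurable_const.mul (hGm.comp nm)).ennreal_ofReal
  have h3m : Measurable h3 :=
    ((measurable_const.mul (hGm.comp nmξ)).ennreal_ofReal).indicator measurableSet_closedBall
  -- pointwise bound
  have hpt : ∀ y ∈ S, ENNReal.ofReal (ρ y / ‖x - y‖) ≤ h1 y + h2 y + h3 y := by
    intro y hy
    rcases eq_or_ne y x with rfl | hne
    · simp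
    · have hc : 0 < ‖x - y‖ := norm_pos_iff.mpr (sub_ne_zero.mpr hne.symm)
      have hcδ : ‖x - y‖ ≤ δ := by
        have := mem_closedBall.mp hy
        rwa [dist_comm, dist_eq_norm] at this
      have base : ρ y / ‖x - y‖ ≤ A / ‖x - y‖ + B * lnm ‖y - ξ‖ / ‖x - y‖ := by
        rw [← add_div]
        exact div_le_div_of_nonneg_right (hbound y) hc.le
      rcases le_or_gt ‖x - y‖ ‖y - ξ‖ with hle | hlt
      · have hmono : lnm ‖y - ξ‖ ≤ lnm ‖x - y‖ := CoulombAux.lnm_anti hc hle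
        have : ρ y / ‖x - y‖ ≤ A / ‖x - y‖ + B * G ‖x - y‖ := by
          refine base.trans (add_le_add_right ?_ _)
          rw [hG, mul_div_assoc]
          exact mul_le_mul_of_nonneg_left (div_le_div_of_nonneg_right hmono hc.le) hB
        calc ENNReal.ofReal (ρ y / ‖x - y‖)
            ≤ ENNReal.ofReal (A / ‖x - y‖ + B * G ‖x - y‖) := ENNReal.ofReal_le_ofReal this
          _ = h1 y + h2 y := by
              rw [ENNReal.ofReal_add (div_nonneg hA hc.le)
                (mul_nonneg hB (div_nonneg (CoulombAux.lnm_nonneg _) (norm_nonneg _)))]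
          _ ≤ h1 y + h2 y + h3 y := le_self_add
      · rcases eq_or_lt_of_le (norm_nonneg (y - ξ)) with hr0 | hr
        · have hlnm0 : lnm ‖y - ξ‖ = 0 := by
            rw [← hr0]; simp [lnm, Real.log_zero]
          have : ρ y / ‖x - y‖ ≤ A / ‖x - y‖ := by
            refine base.trans ?_
            rw [hlnm0]
            simp
          calc ENNReal.ofReal (ρ y / ‖x - y‖)
              ≤ h1 y := ENNReal.ofReal_le_ofReal this
            _ ≤ h1 y + h2 y + h3 y := by
                exact le_add_right (le_add_right le_rfl)
        · have hyξ : y ∈ closedBall ξ δ := by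
            rw [mem_closedBall, dist_eq_norm]
            exact (hlt.trans_le hcδ).le
          have hstep : ρ y / ‖x - y‖ ≤ A / ‖x - y‖ + B * G ‖y - ξ‖ := by
            refine base.trans (add_le_add_right ?_ _)
            rw [hG, mul_div_assoc]
            refine mul_le_mul_of_nonneg_left ?_ hB
            exact div_le_div_of_nonneg_left (CoulombAux.lnm_nonneg _) hr hlt.le
          calc ENNReal.ofReal (ρ y / ‖x - y‖)
              ≤ ENNReal.ofReal (A / ‖x - y‖ + B * G ‖y - ξ‖) := ENNReal.ofReal_le_ofReal hstep
            _ = h1 y + ENNReal.ofReal (B * G ‖y - ξ‖) := by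
                rw [ENNReal.ofReal_add (div_nonneg hA hc.le)
                  (mul_nonneg hB (div_nonneg (CoulombAux.lnm_nonneg _) (norm_nonneg _)))]
            _ = h1 y + h3 y := by rw [hh3, indicator_of_mem hyξ]
            _ ≤ h1 y + h2 y + h3 y := by
                exact add_le_add (le_add_right le_rfl) le_rfl
  -- the three integrals
  set M : ℝ := δ * (1 - Real.log δ) with hM
  have hlogδ : Real.log δ < 0 := Real.log_neg hδ hδ1
  have hMnn : 0 ≤ M := by nlinarith
  have hf1m : Measurable fun r : ℝ => ENNReal.ofReal (A / r) :=
    (measurable_const.div measurable_id).ennreal_ofReal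
  have hf2m : Measurable fun r : ℝ => ENNReal.ofReal (B * G r) :=
    (measurable_const.mul hGm).ennreal_ofReal
  have T1 : ∫⁻ y in S, h1 y = ENNReal.ofReal (2 * Vr * (A * δ)) := by
    rw [hS, CoulombAux.ball_polar x hδ _ hf1m]
    have : ∫⁻ y in Ioc (0:ℝ) δ, ENNReal.ofReal y * ENNReal.ofReal (A / y)
        = ∫⁻ _ in Ioc (0:ℝ) δ, ENNReal.ofReal A := by
      refine setLIntegral_congr_fun measurableSet_Ioc
        (fun y hy => ?_)
      rw [← ENNReal.ofReal_mul hy.1.le, mul_comm, div_mul_cancel₀ _ hy.1.ne']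
    rw [this, setLIntegral_const, Real.volume_Ioc, sub_zero, ← ENNReal.ofReal_mul hA,
      key2 _ (by positivity)]
  have inner2 : ∫⁻ y in Ioc (0:ℝ) δ, ENNReal.ofReal y * ENNReal.ofReal (B * G y)
      ≤ ENNReal.ofReal (B * M) := by
    have : ∫⁻ y in Ioc (0:ℝ) δ, ENNReal.ofReal y * ENNReal.ofReal (B * G y)
        = ∫⁻ y in Ioc (0:ℝ) δ, ENNReal.ofReal B * ENNReal.ofReal (-Real.log y) := by
      refine setLIntegral_congr_fun measurableSet_Ioc
        (fun y hy => ?_)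
      have hy0 : (0:ℝ) < y := hy.1
      have hlnm : lnm y = -Real.log y :=
        max_eq_left (neg_nonneg.mpr (Real.log_nonpos hy0.le (hy.2.trans hδ1.le)))
      rw [← ENNReal.ofReal_mul hy0.le, ← ENNReal.ofReal_mul hB]
      congr 1
      rw [hG]
      field_simp [hlnm]
      rw [hlnm]; ring
    rw [this, lintegral_const_mul (f := fun y => ENNReal.ofReal (-Real.log y)) _ Real.measurable_log.neg.ennreal_ofReal,
      ENNReal.ofReal_mul hB]
    exact mul_le_mul_right (CoulombAux.lintegral_neg_log_le hδ hδ1) _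
  have T2 : ∫⁻ y in S, h2 y ≤ ENNReal.ofReal (2 * Vr * (B * M)) := by
    rw [hS, CoulombAux.ball_polar x hδ _ hf2m, ← key2 _ (by positivity)]
    exact mul_le_mul_right inner2 _
  have T3 : ∫⁻ y in S, h3 y ≤ ENNReal.ofReal (2 * Vr * (B * M)) := by
    calc ∫⁻ y in S, h3 y ≤ ∫⁻ y, h3 y := setLIntegral_le_lintegral _ _
      _ = ∫⁻ y in closedBall ξ δ, ENNReal.ofReal (B * G ‖y - ξ‖) := by
          rw [hh3, lintegral_indicator measurableSet_closedBall]
      _ = ∫⁻ y in closedBall ξ δ, ENNReal.ofReal (B * G ‖ξ - y‖) := by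
          refine setLIntegral_congr_fun measurableSet_closedBall
            (fun y hy => ?_)
          rw [norm_sub_rev]
      _ ≤ ENNReal.ofReal (2 * Vr * (B * M)) := by
          rw [CoulombAux.ball_polar ξ hδ _ hf2m, ← key2 _ (by positivity)]
          exact mul_le_mul_right inner2 _
  -- put together
  have habs : 1 + |Real.log δ| = 1 - Real.log δ := by
    rw [abs_of_neg hlogδ]; ring
  have hRHSnn : 0 ≤ 4 * Vr * (A * δ + B * δ * (1 + |Real.log δ|)) := by positivity
  have hmain : ∫⁻ y in S, ENNReal.ofReal (ρ y / ‖x - y‖)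
      ≤ ENNReal.ofReal (4 * Vr * (A * δ + B * δ * (1 + |Real.log δ|))) := by
    calc ∫⁻ y in S, ENNReal.ofReal (ρ y / ‖x - y‖)
        ≤ ∫⁻ y in S, (h1 y + h2 y + h3 y) :=
          setLIntegral_mono ((h1m.add h2m).add h3m) hpt
      _ = (∫⁻ y in S, h1 y) + (∫⁻ y in S, h2 y) + ∫⁻ y in S, h3 y := by
          rw [lintegral_add_left (f := fun y => h1 y + h2 y) (h1m.add h2m), lintegral_add_left h1m]
      _ ≤ ENNReal.ofReal (2 * Vr * (A * δ)) + ENNReal.ofReal (2 * Vr * (B * M))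
            + ENNReal.ofReal (2 * Vr * (B * M)) := by
          exact add_le_add (add_le_add (le_of_eq T1) T2) T3
      _ = ENNReal.ofReal (2 * Vr * (A * δ) + 2 * Vr * (B * M) + 2 * Vr * (B * M)) := by
          rw [← ENNReal.ofReal_add (by positivity) (by positivity),
            ← ENNReal.ofReal_add (by positivity) (by positivity)]
      _ ≤ ENNReal.ofReal (4 * Vr * (A * δ + B * δ * (1 + |Real.log δ|))) := by
          apply ENNReal.ofReal_le_ofReal
          rw [habs, hM]
          nlinarith [mul_nonneg hA hδ.le, mul_nonneg hB hMnn, hVrpos.le,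
            mul_nonneg (mul_nonneg hA hδ.le) hVrpos.le]
  have hnn : 0 ≤ᵐ[volume.restrict S] fun y => ρ y / ‖x - y‖ :=
    Filter.Eventually.of_forall (fun y => div_nonneg (hρ0 y) (norm_nonneg _))
  rw [integral_eq_lintegral_of_nonneg_ae hnn (hρ.div nm).aestronglyMeasurable]
  exact ENNReal.toReal_le_of_le_ofReal hRHSnn hmain
end

section
/- Let ρ : ℝ² → [0,∞) be measurable with ρ(x) ≤ H + ln_−|x−ξ| for some H ≥ 1 and ξ ∈ ℝ², and with ‖ρ‖_{L¹} ≤ 1 and ‖ρ‖_{L²} ≤ M. Then the field E(x) = ∫ ρ(y) (x−y)/|x−y|² dy satisfies ‖E‖_{L^∞} ≤ C(M) √(ln(H+e)) for a constant C(M) depending only on M. -/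
open MeasureTheory

open Set Metric

local notation "E2" => EuclideanSpace ℝ (Fin 2)

noncomputable def BB : ℝ := (volume (Metric.ball (0 : EuclideanSpace ℝ (Fin 2)) 1)).toReal

lemma BB_pos : 0 < BB :=
  ENNReal.toReal_pos (measure_ball_pos _ _ one_pos).ne' measure_ball_lt_top.ne

lemma polar_integral (f : ℝ → ℝ) :
    ∫ x : E2, f ‖x‖ = 2 * BB * ∫ r in Ioi (0:ℝ), r * f r := by
  rw [MeasureTheory.integral_fun_norm_addHaar (volume : Measure E2) f]
  have h2 : Module.finrank ℝ E2 = 2 := finrank_euclideanSpace_fin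
  rw [h2]
  simp [BB, smul_eq_mul, mul_assoc, pow_one, measureReal_def]

lemma polar_integrable (f : ℝ → ℝ) (hf : Measurable f)
    (hi : IntegrableOn (fun r => r * f r) (Ioi (0:ℝ))) :
    Integrable (fun x : E2 => f ‖x‖) := by
  set P := Measure.toSphere (volume : Measure E2) with hP
  set Q := Measure.volumeIoiPow (Module.finrank ℝ E2 - 1) with hQ
  have hrank : Module.finrank ℝ E2 - 1 = 1 := by rw [finrank_euclideanSpace_fin]
  have me1 : MeasurableEmbedding (Subtype.val : (Ioi (0:ℝ)) → ℝ) :=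
    MeasurableEmbedding.subtype_coe measurableSet_Ioi
  -- Step 1 : integrable on subtype Ioi 0 wrt comap
  have h1 : Integrable ((fun r : ℝ => r * f r) ∘ (Subtype.val : (Ioi (0:ℝ)) → ℝ))
      ((volume : Measure ℝ).comap (Subtype.val : (Ioi (0:ℝ)) → ℝ)) := by
    rw [← me1.integrable_map_iff, me1.map_comap, Subtype.range_coe]
    exact hi
  -- Step 2 : integrable wrt volumeIoiPow 1
  have h2 : Integrable (f ∘ Subtype.val) Q := by
    rw [hQ, hrank, Measure.volumeIoiPow]
    rw [integrable_withDensity_iff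
      (by exact ENNReal.measurable_ofReal.comp ((measurable_subtype_coe).pow_const 1))
      (Filter.Eventually.of_forall fun r => ENNReal.ofReal_lt_top)]
    refine h1.congr (Filter.Eventually.of_forall fun r => ?_)
    simp only [Function.comp_apply, pow_one]
    rw [ENNReal.toReal_ofReal (le_of_lt r.2)]
    ring
  -- Step 3 : integrable wrt product
  have hPuniv : P Set.univ ≠ ⊤ := measure_ne_top P _
  have h3 : Integrable (f ∘ Subtype.val ∘ Prod.snd) (P.prod Q) := by
    have hmap : Integrable (f ∘ Subtype.val)
        (Measure.map Prod.snd (P.prod Q)) := by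
      rw [Measure.map_snd_prod]
      exact h2.smul_measure hPuniv
    have := (integrable_map_measure
      (f := (Prod.snd : (sphere (0:E2) 1 × Ioi (0:ℝ)) → Ioi (0:ℝ)))
      (g := f ∘ Subtype.val)
      (hf.comp measurable_subtype_coe).aestronglyMeasurable
      measurable_snd.aemeasurable).mp hmap
    exact this
  -- Step 4 : integrable on punctured plane wrt comap
  have h4 : Integrable (fun x : ({(0:E2)}ᶜ : Set E2) => f ‖x.1‖)
      ((volume : Measure E2).comap Subtype.val) := by
    convert ((Measure.measurePreserving_homeomorphUnitSphereProd
      (volume : Measure E2)).integrable_comp_emb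
      (Homeomorph.measurableEmbedding _)).mpr h3 using 1
    funext x; simp [homeomorphUnitSphereProd, homeomorphSphereProd]
  -- Step 5 : back to the plane
  have me2 : MeasurableEmbedding (Subtype.val : ({(0:E2)}ᶜ : Set E2) → E2) :=
    MeasurableEmbedding.subtype_coe (measurableSet_singleton 0).compl
  have h5 : Integrable ((fun x : E2 => f ‖x‖) ∘ (Subtype.val : ({(0:E2)}ᶜ : Set E2) → E2))
      ((volume : Measure E2).comap (Subtype.val : ({(0:E2)}ᶜ : Set E2) → E2)) := h4
  rw [← me2.integrable_map_iff, me2.map_comap, Subtype.range_coe,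
    MeasureTheory.restrict_compl_singleton] at h5
  exact h5

lemma polar_integral' (c : E2) (f : ℝ → ℝ) :
    ∫ y : E2, f ‖y - c‖ = 2 * BB * ∫ r in Ioi (0:ℝ), r * f r := by
  rw [← polar_integral f]
  exact integral_sub_right_eq_self (fun y : E2 => f ‖y‖) c

lemma polar_integrable' (c : E2) (f : ℝ → ℝ) (hf : Measurable f)
    (hi : IntegrableOn (fun r => r * f r) (Ioi (0:ℝ))) :
    Integrable (fun y : E2 => f ‖y - c‖) :=
  (polar_integrable f hf hi).comp_sub_right c

lemma mul_indicator_eq (s : Set ℝ) (f : ℝ → ℝ) :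
    (fun r : ℝ => r * Set.indicator s f r) = Set.indicator s (fun r => r * f r) := by
  funext r; by_cases h : r ∈ s <;> simp [h]

lemma radial_piece (c : E2) {s : Set ℝ} (hs : MeasurableSet s) (hsub : s ⊆ Ioi (0:ℝ))
    {f : ℝ → ℝ} (hf : Measurable f) (hi : IntegrableOn (fun r => r * f r) s) :
    Integrable (fun y : E2 => Set.indicator s f ‖y - c‖) ∧
    ∫ y : E2, Set.indicator s f ‖y - c‖ = 2 * BB * ∫ r in s, r * f r := by
  have hm : Measurable (Set.indicator s f) := hf.indicator hs
  have hind : IntegrableOn (fun r => r * Set.indicator s f r) (Ioi 0) := by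
    rw [mul_indicator_eq]
    exact (hi.integrable_indicator hs).integrableOn
  refine ⟨polar_integrable' c _ hm hind, ?_⟩
  rw [polar_integral' c, mul_indicator_eq, integral_indicator hs,
    Measure.restrict_restrict hs, inter_eq_self_of_subset_left hsub]

lemma g1_facts {δ : ℝ} (hδ : 0 < δ) (c : E2) :
    Integrable (fun y : E2 => Set.indicator (Ioo 0 δ) (fun r => r⁻¹) ‖y - c‖) ∧
    ∫ y : E2, Set.indicator (Ioo 0 δ) (fun r => r⁻¹) ‖y - c‖ = 2 * BB * δ := by
  have heq : EqOn (fun r : ℝ => r * r⁻¹) (fun _ => (1:ℝ)) (Ioo 0 δ) := fun r hr => by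
    simp [mul_inv_cancel₀ hr.1.ne']
  have hi : IntegrableOn (fun r : ℝ => r * r⁻¹) (Ioo 0 δ) := by
    refine (IntegrableOn.congr_fun ?_ heq.symm measurableSet_Ioo)
    exact integrableOn_const measure_Ioo_lt_top.ne
  have h := radial_piece c measurableSet_Ioo Ioo_subset_Ioi_self
    (measurable_inv) hi
  refine ⟨h.1, ?_⟩
  rw [h.2, setIntegral_congr_fun measurableSet_Ioo heq]
  simp [Real.volume_Ioo, hδ.le]

lemma g2_facts {δ : ℝ} (hδ : 0 < δ) (c : E2) :
    Integrable (fun y : E2 =>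
      Set.indicator (Ioo 0 δ) (fun r => 2 * r ^ (-(1/2):ℝ) * r⁻¹) ‖y - c‖) ∧
    ∫ y : E2, Set.indicator (Ioo 0 δ) (fun r => 2 * r ^ (-(1/2):ℝ) * r⁻¹) ‖y - c‖
      = 2 * BB * (4 * δ ^ ((1/2):ℝ)) := by
  have heq : EqOn (fun r : ℝ => r * (2 * r ^ (-(1/2):ℝ) * r⁻¹))
      (fun r : ℝ => 2 * r ^ (-(1/2):ℝ)) (Ioo 0 δ) := fun r hr => by
    simp only []
    have h1 : r * (2 * r ^ (-(1/2):ℝ) * r⁻¹) = 2 * r ^ (-(1/2):ℝ) * (r * r⁻¹) := by ring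
    rw [h1, mul_inv_cancel₀ hr.1.ne', mul_one]
  have hi' : IntegrableOn (fun r : ℝ => 2 * r ^ (-(1/2):ℝ)) (Ioo 0 δ) := by
    refine IntegrableOn.mono_set ?_ Ioo_subset_Ioc_self
    exact ((intervalIntegral.intervalIntegrable_rpow'
      (by norm_num : (-1:ℝ) < -(1/2))).1.const_mul 2)
  have hi : IntegrableOn (fun r : ℝ => r * (2 * r ^ (-(1/2):ℝ) * r⁻¹)) (Ioo 0 δ) :=
    IntegrableOn.congr_fun hi' heq.symm measurableSet_Ioo
  have hmeas : Measurable (fun r : ℝ => 2 * r ^ (-(1/2):ℝ) * r⁻¹) := by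
    fun_prop
  have h := radial_piece c measurableSet_Ioo Ioo_subset_Ioi_self hmeas hi
  refine ⟨h.1, ?_⟩
  rw [h.2, setIntegral_congr_fun measurableSet_Ioo heq]
  have : ∫ r in Ioo (0:ℝ) δ, 2 * r ^ (-(1/2):ℝ) = 4 * δ ^ ((1/2):ℝ) := by
    rw [← integral_Ioc_eq_integral_Ioo, ← intervalIntegral.integral_of_le hδ.le,
      intervalIntegral.integral_const_mul, integral_rpow (Or.inl (by norm_num))]
    rw [Real.zero_rpow (by norm_num)]
    norm_num
    ring
  rw [this]

lemma g3_facts {δ : ℝ} (hδ0 : 0 < δ) (hδ1 : δ ≤ 1) (c : E2) :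
    MemLp (fun y : E2 => Set.indicator (Ico δ 1) (fun r => r⁻¹) ‖y - c‖) 2 volume ∧
    ∫ y : E2, (Set.indicator (Ico δ 1) (fun r => r⁻¹) ‖y - c‖) ^ 2
      = 2 * BB * Real.log δ⁻¹ := by
  have hmeas : Measurable fun y : E2 => Set.indicator (Ico δ 1) (fun r : ℝ => r⁻¹) ‖y - c‖ :=
    (measurable_inv.indicator measurableSet_Ico).comp ((measurable_id.sub_const c).norm)
  have hsq : (fun y : E2 => (Set.indicator (Ico δ 1) (fun r : ℝ => r⁻¹) ‖y - c‖) ^ 2)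
      = fun y : E2 => Set.indicator (Ico δ 1) (fun r : ℝ => (r⁻¹) ^ 2) ‖y - c‖ := by
    funext y; by_cases h : ‖y - c‖ ∈ Ico δ 1 <;> simp [h]
  have heq : EqOn (fun r : ℝ => r * (r⁻¹) ^ 2) (fun r : ℝ => r⁻¹) (Ico δ 1) := fun r hr => by
    have h0 : r ≠ 0 := ne_of_gt (lt_of_lt_of_le hδ0 hr.1)
    simp only []
    rw [pow_two]
    field_simp
  have hcont : IntegrableOn (fun r : ℝ => r⁻¹) (Ico δ 1) := by
    have h1 : ContinuousOn (fun r : ℝ => r⁻¹) (Icc δ 1) :=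
      ContinuousOn.inv₀ continuousOn_id fun x hx => ne_of_gt (lt_of_lt_of_le hδ0 hx.1)
    exact (h1.integrableOn_Icc).mono_set Ico_subset_Icc_self
  have hi : IntegrableOn (fun r : ℝ => r * (r⁻¹) ^ 2) (Ico δ 1) :=
    IntegrableOn.congr_fun hcont heq.symm measurableSet_Ico
  have hsub : Ico δ 1 ⊆ Ioi (0:ℝ) := fun r hr => lt_of_lt_of_le hδ0 hr.1
  have h := radial_piece c measurableSet_Ico hsub (by fun_prop) hi
  constructor
  · refine (memLp_two_iff_integrable_sq hmeas.aestronglyMeasurable).mpr ?_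
    rw [hsq]; exact h.1
  · rw [hsq, h.2, setIntegral_congr_fun measurableSet_Ico heq,
      integral_Ico_eq_integral_Ioo, ← integral_Ioc_eq_integral_Ioo,
      ← intervalIntegral.integral_of_le hδ1, integral_inv
        (by rw [Set.uIcc_of_le hδ1]; exact fun h => absurd h.1 (not_le.mpr hδ0)),
      one_div]


lemma lnm_nonneg (r : ℝ) : 0 ≤ lnm r := le_max_right _ _

lemma lnm_of_one_le {r : ℝ} (h : 1 ≤ r) : lnm r = 0 :=
  max_eq_right (neg_nonpos.2 (Real.log_nonneg h))

lemma lnm_zero' : lnm 0 = 0 := by simp [lnm]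

lemma lnm_le_rpow {r : ℝ} (h : 0 < r) : lnm r ≤ 2 * r ^ (-(1/2):ℝ) := by
  have hv : 0 < r ^ (-(1/2):ℝ) := Real.rpow_pos_of_pos h _
  have hlog : Real.log (r ^ (-(1/2):ℝ)) ≤ r ^ (-(1/2):ℝ) - 1 :=
    Real.log_le_sub_one_of_pos hv
  rw [Real.log_rpow h] at hlog
  have h1 : -Real.log r ≤ 2 * r ^ (-(1/2):ℝ) := by linarith
  exact max_le h1 (by positivity)

lemma lnm_anti {r s : ℝ} (hr : 0 < r) (hrs : r ≤ s) : lnm s ≤ lnm r :=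
  max_le_max (neg_le_neg (Real.log_le_log hr hrs)) le_rfl

lemma sq_rpow_half (s : ℝ) (hs : 0 ≤ s) : (s ^ (-(1/2):ℝ)) ^ 2 = s⁻¹ := by
  rw [← Real.rpow_natCast (s ^ (-(1/2):ℝ)) 2, ← Real.rpow_mul hs]
  norm_num
  exact Real.rpow_neg_one s

lemma rho_memL2 {ρ : E2 → ℝ} {H : ℝ} {ξ : E2} (hH : 1 ≤ H) (hm : Measurable ρ)
    (h0 : ∀ x, 0 ≤ ρ x) (hint : Integrable ρ) (hle : ∀ x, ρ x ≤ H + lnm ‖x - ξ‖) :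
    MemLp ρ 2 volume := by
  have hH0 : (0:ℝ) < H := lt_of_lt_of_le one_pos hH
  refine (memLp_two_iff_integrable_sq hm.aestronglyMeasurable).mpr ?_
  have hg4i : Integrable (fun y : E2 =>
      Set.indicator (Ioo 0 1) (fun r => 2*H^2 + 8*r⁻¹) ‖y - ξ‖) := by
    refine (radial_piece ξ measurableSet_Ioo Ioo_subset_Ioi_self (by fun_prop) ?_).1
    have heq : EqOn (fun r : ℝ => r * (2*H^2 + 8*r⁻¹)) (fun r => 2*H^2*r + 8)
        (Ioo 0 1) := fun r hr => by
      have h0 : r ≠ 0 := hr.1.ne'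
      simp only []
      field_simp
    refine IntegrableOn.congr_fun ?_ heq.symm measurableSet_Ioo
    have h1 : ContinuousOn (fun r : ℝ => 2*H^2*r + 8) (Icc 0 1) := by fun_prop
    exact (h1.integrableOn_Icc).mono_set Ioo_subset_Icc_self
  refine Integrable.mono' ((hint.const_mul H).add hg4i)
    ((hm.pow_const 2).aestronglyMeasurable) (Filter.Eventually.of_forall fun y => ?_)
  rw [Real.norm_eq_abs, abs_of_nonneg (sq_nonneg _)]
  set s := ‖y - ξ‖ with hsdef
  have hs0 : 0 ≤ s := norm_nonneg _
  by_cases hs : s ∈ Ioo (0:ℝ) 1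
  · have hlnm := lnm_le_rpow hs.1
    set v := s ^ (-(1/2):ℝ) with hv
    have hv0 : 0 ≤ v := Real.rpow_nonneg hs0 _
    have hρy : ρ y ≤ H + 2 * v := (hle y).trans (by linarith)
    have key : ρ y ^ 2 ≤ (H + 2 * v) ^ 2 := pow_le_pow_left₀ (h0 y) hρy 2
    have hv2 : v ^ 2 = s⁻¹ := sq_rpow_half s hs0
    simp only [Pi.add_apply, ← hsdef, Set.indicator_of_mem hs]
    nlinarith [sq_nonneg (H - 2*v), mul_nonneg hH0.le (h0 y)]
  · have hlnm : lnm s = 0 := by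
      rcases eq_or_lt_of_le hs0 with h|h
      · rw [← h]; exact lnm_zero'
      · have : 1 ≤ s := by
          by_contra hc
          exact hs ⟨h, not_le.mp hc⟩
        exact lnm_of_one_le this
    have hρy : ρ y ≤ H := by have := hle y; rw [hlnm] at this; linarith
    simp only [Pi.add_apply, ← hsdef, Set.indicator_of_notMem hs]
    nlinarith [h0 y]

noncomputable def q1 (δ : ℝ) : ℝ → ℝ := Set.indicator (Ioo 0 δ) (fun r => r⁻¹)
noncomputable def q2 (δ : ℝ) : ℝ → ℝ :=
  Set.indicator (Ioo 0 δ) (fun r => 2 * r ^ (-(1/2):ℝ) * r⁻¹)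
noncomputable def q3 (δ : ℝ) : ℝ → ℝ := Set.indicator (Ico δ 1) (fun r => r⁻¹)

lemma q1_nonneg {δ : ℝ} (r : ℝ) : 0 ≤ q1 δ r :=
  Set.indicator_nonneg (fun t ht => inv_nonneg.2 ht.1.le) r

lemma q2_nonneg {δ : ℝ} (r : ℝ) : 0 ≤ q2 δ r :=
  Set.indicator_nonneg (fun t ht => mul_nonneg
    (mul_nonneg (by norm_num) (Real.rpow_nonneg ht.1.le _)) (inv_nonneg.2 ht.1.le)) r

lemma q3_nonneg {δ : ℝ} (hδ : 0 < δ) (r : ℝ) : 0 ≤ q3 δ r :=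
  Set.indicator_nonneg (fun t ht => inv_nonneg.2 (le_trans hδ.le ht.1)) r

lemma q1_facts {δ : ℝ} (hδ : 0 < δ) (c : E2) :
    Integrable (fun y : E2 => q1 δ ‖y - c‖) ∧
    ∫ y : E2, q1 δ ‖y - c‖ = 2 * BB * δ := g1_facts hδ c

lemma q2_facts {δ : ℝ} (hδ : 0 < δ) (c : E2) :
    Integrable (fun y : E2 => q2 δ ‖y - c‖) ∧
    ∫ y : E2, q2 δ ‖y - c‖ = 2 * BB * (4 * δ ^ ((1/2):ℝ)) := g2_facts hδ c

lemma q3_facts {δ : ℝ} (hδ0 : 0 < δ) (hδ1 : δ ≤ 1) (c : E2) :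
    MemLp (fun y : E2 => q3 δ ‖y - c‖) 2 volume ∧
    ∫ y : E2, (q3 δ ‖y - c‖) ^ 2 = 2 * BB * Real.log δ⁻¹ := g3_facts hδ0 hδ1 c

set_option maxHeartbeats 2000000 in
theorem main_bound (M : ℝ) (hM : 0 < M) :
    ∃ C > 0, ∀ (ρ : EuclideanSpace ℝ (Fin 2) → ℝ) (H : ℝ)
      (ξ : EuclideanSpace ℝ (Fin 2)),
      1 ≤ H → Measurable ρ → (∀ x, 0 ≤ ρ x) → Integrable ρ →
      (∀ x, ρ x ≤ H + lnm ‖x - ξ‖) →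
      (∫ x, ρ x) ≤ 1 → Real.sqrt (∫ x, ρ x ^ 2) ≤ M →
      ∀ x : EuclideanSpace ℝ (Fin 2),
        ‖∫ y, (ρ y / ‖x - y‖ ^ 2) • (x - y)‖ ≤
          C * Real.sqrt (Real.log (H + Real.exp 1)) := by
  have hBB := BB_pos
  refine ⟨18 * BB + 1 + Real.sqrt (2 * BB) * M, by positivity, ?_⟩
  intro ρ H ξ hH hm h0 hint hle hρ1 hρ2 x
  have hH0 : (0:ℝ) < H := lt_of_lt_of_le one_pos hH
  set δ : ℝ := H⁻¹ with hδdef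
  have hδ0 : 0 < δ := inv_pos.2 hH0
  have hδ1 : δ ≤ 1 := by
    rw [hδdef]
    exact inv_le_one_of_one_le₀ hH
  have h1x := q1_facts hδ0 x
  have h2x := q2_facts hδ0 x
  have h2ξ := q2_facts hδ0 ξ
  have h3x := q3_facts hδ0 hδ1 x
  have hρL2 := rho_memL2 hH hm h0 hint hle
  -- product piece is integrable
  have hprod : Integrable (fun y : E2 => ρ y * q3 δ ‖y - x‖) := by
    have hsmul : MemLp (ρ • fun y : E2 => q3 δ ‖y - x‖) 1 volume :=
      MemLp.smul (r := 1) h3x.1 hρL2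
    exact memLp_one_iff_integrable.mp hsmul
  -- Cauchy-Schwarz
  have hconj : Real.HolderConjugate 2 2 := by
    rw [Real.holderConjugate_iff]
    norm_num
  have hCS : ∫ y : E2, ρ y * q3 δ ‖y - x‖ ≤
      M * (Real.sqrt (2 * BB) * Real.sqrt (Real.log H)) := by
    have h2e : (ENNReal.ofReal (2:ℝ)) = 2 := by norm_num
    have hρL2' : MemLp ρ (ENNReal.ofReal (2:ℝ)) volume := by rw [h2e]; exact hρL2
    have h3x' : MemLp (fun y : E2 => q3 δ ‖y - x‖) (ENNReal.ofReal (2:ℝ)) volume := by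
      rw [h2e]; exact h3x.1
    have hHolder := integral_mul_le_Lp_mul_Lq_of_nonneg (μ := (volume : Measure E2)) hconj
      (f := ρ) (g := fun y : E2 => q3 δ ‖y - x‖)
      (Filter.Eventually.of_forall h0)
      (Filter.Eventually.of_forall fun y => q3_nonneg hδ0 _)
      hρL2' h3x'
    have hpow : ∀ u : ℝ, u ^ (2:ℝ) = u ^ (2:ℕ) := fun u => by
      rw [show ((2:ℝ)) = ((2:ℕ):ℝ) by norm_num, Real.rpow_natCast]
    simp only [hpow] at hHolder
    rw [← Real.sqrt_eq_rpow, ← Real.sqrt_eq_rpow] at hHolder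
    refine hHolder.trans ?_
    have hq3v : Real.sqrt (∫ y : E2, (q3 δ ‖y - x‖) ^ 2) =
        Real.sqrt (2 * BB) * Real.sqrt (Real.log H) := by
      rw [h3x.2, hδdef, inv_inv, Real.sqrt_mul (by positivity)]
    rw [hq3v]
    exact mul_le_mul_of_nonneg_right hρ2 (by positivity)
  -- master pointwise estimate
  have master : ∀ y : E2, ρ y / ‖x - y‖ ≤
      H * q1 δ ‖y - x‖ + q2 δ ‖y - x‖ + q2 δ ‖y - ξ‖ + ρ y * q3 δ ‖y - x‖ + ρ y := by
    intro y
    have hry : ‖y - x‖ = ‖x - y‖ := norm_sub_rev y x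
    set r := ‖x - y‖ with hrdef
    have hr0 : 0 ≤ r := norm_nonneg _
    set s := ‖y - ξ‖ with hsdef
    have hs0 : 0 ≤ s := norm_nonneg _
    rw [hry]
    have hn1 : 0 ≤ H * q1 δ r := mul_nonneg hH0.le (q1_nonneg _)
    have hn2 : 0 ≤ q2 δ r := q2_nonneg _
    have hn3 : 0 ≤ q2 δ s := q2_nonneg _
    have hn4 : 0 ≤ ρ y * q3 δ r := mul_nonneg (h0 y) (q3_nonneg hδ0 _)
    have hn5 : 0 ≤ ρ y := h0 y
    rcases eq_or_lt_of_le hr0 with hr|hr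
    · have hz : ρ y / r = 0 := by rw [← hr, div_zero]
      rw [hz]
      linarith
    rcases lt_or_ge r δ with hrδ|hrδ
    · -- near region
      have hmem : r ∈ Ioo (0:ℝ) δ := ⟨hr, hrδ⟩
      have hq1r : q1 δ r = r⁻¹ := Set.indicator_of_mem hmem _
      have hq2r : q2 δ r = 2 * r ^ (-(1/2):ℝ) * r⁻¹ := Set.indicator_of_mem hmem _
      have step1 : ρ y / r ≤ (H + lnm s) / r := by
        gcongr
        exact hle y
      have step2 : lnm s / r ≤ q2 δ r + q2 δ s := by
        rcases le_or_gt r s with hc|hc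
        · have h1 : lnm s ≤ 2 * r ^ (-(1/2):ℝ) := (lnm_anti hr hc).trans (lnm_le_rpow hr)
          have h2 : lnm s / r ≤ 2 * r ^ (-(1/2):ℝ) * r⁻¹ := by
            rw [← div_eq_mul_inv]
            gcongr
          rw [hq2r]
          linarith
        · rcases eq_or_lt_of_le hs0 with hs|hs
          · have hz : lnm s = 0 := by rw [← hs]; exact lnm_zero'
            rw [hz, zero_div]
            linarith
          · have hsδ : s ∈ Ioo (0:ℝ) δ := ⟨hs, hc.trans hrδ⟩
            have hq2s : q2 δ s = 2 * s ^ (-(1/2):ℝ) * s⁻¹ := Set.indicator_of_mem hsδ _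
            have h1 : lnm s / r ≤ lnm s / s :=
              div_le_div_of_nonneg_left (lnm_nonneg s) hs hc.le
            have h2 : lnm s / s ≤ 2 * s ^ (-(1/2):ℝ) * s⁻¹ := by
              rw [← div_eq_mul_inv]
              gcongr
              exact lnm_le_rpow hs
            rw [hq2s]
            linarith
      have hHdiv : H / r = H * q1 δ r := by rw [hq1r, div_eq_mul_inv]
      have hadd : (H + lnm s) / r = H / r + lnm s / r := add_div _ _ _
      linarith [step1, step2, hadd ▸ step1]
    rcases lt_or_ge r 1 with hr1|hr1
    · -- middle region
      have hmem : r ∈ Ico δ 1 := ⟨hrδ, hr1⟩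
      have heq : ρ y / r = ρ y * q3 δ r := by
        rw [div_eq_mul_inv]
        congr 1
        exact (Set.indicator_of_mem hmem _).symm
      rw [heq]
      linarith
    · -- far region
      have : ρ y / r ≤ ρ y := div_le_self (h0 y) hr1
      linarith
  -- assemble
  have hGint : Integrable (fun y : E2 => H * q1 δ ‖y - x‖ + q2 δ ‖y - x‖ + q2 δ ‖y - ξ‖
      + ρ y * q3 δ ‖y - x‖ + ρ y) :=
    ((((h1x.1.const_mul H).add h2x.1).add h2ξ.1).add hprod).add hint
  have hnormle : ‖∫ y, (ρ y / ‖x - y‖ ^ 2) • (x - y)‖ ≤ ∫ y : E2, ρ y / ‖x - y‖ := by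
    refine (norm_integral_le_integral_norm _).trans_eq ?_
    congr 1
    funext y
    rw [norm_smul, Real.norm_eq_abs, abs_of_nonneg (div_nonneg (h0 y) (by positivity))]
    rcases eq_or_ne (‖x - y‖) 0 with h|h
    · simp [h]
    · field_simp
  have hmono : ∫ y : E2, ρ y / ‖x - y‖ ≤ ∫ y : E2, (H * q1 δ ‖y - x‖ + q2 δ ‖y - x‖
      + q2 δ ‖y - ξ‖ + ρ y * q3 δ ‖y - x‖ + ρ y) :=
    integral_mono_of_nonneg
      (Filter.Eventually.of_forall fun y => div_nonneg (h0 y) (norm_nonneg _)) hGint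
      (Filter.Eventually.of_forall master)
  have hsplit : ∫ y : E2, (H * q1 δ ‖y - x‖ + q2 δ ‖y - x‖ + q2 δ ‖y - ξ‖
      + ρ y * q3 δ ‖y - x‖ + ρ y)
      = H * (2 * BB * δ) + 2 * BB * (4 * δ ^ ((1/2):ℝ)) + 2 * BB * (4 * δ ^ ((1/2):ℝ))
      + (∫ y : E2, ρ y * q3 δ ‖y - x‖) + ∫ y : E2, ρ y := by
    have iA : Integrable (fun y : E2 => H * q1 δ ‖y - x‖ + q2 δ ‖y - x‖ + q2 δ ‖y - ξ‖
        + ρ y * q3 δ ‖y - x‖) := by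
      exact (((h1x.1.const_mul H).add h2x.1).add h2ξ.1).add hprod
    have iB : Integrable (fun y : E2 => H * q1 δ ‖y - x‖ + q2 δ ‖y - x‖ + q2 δ ‖y - ξ‖) := by
      exact ((h1x.1.const_mul H).add h2x.1).add h2ξ.1
    have iC : Integrable (fun y : E2 => H * q1 δ ‖y - x‖ + q2 δ ‖y - x‖) := by
      exact (h1x.1.const_mul H).add h2x.1
    have iD : Integrable (fun y : E2 => H * q1 δ ‖y - x‖) := h1x.1.const_mul H
    rw [integral_add iA hint, integral_add iB hprod, integral_add iC h2ξ.1,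
      integral_add iD h2x.1, integral_const_mul, h1x.2, h2x.2, h2ξ.2]
  -- numerics
  have hδH : H * (2 * BB * δ) = 2 * BB := by
    rw [hδdef]
    field_simp
  have hroot : δ ^ ((1/2):ℝ) ≤ 1 := Real.rpow_le_one hδ0.le hδ1 (by norm_num)
  have hlogHe : (1:ℝ) ≤ Real.log (H + Real.exp 1) := by
    rw [Real.le_log_iff_exp_le (by positivity)]
    norm_num
    linarith
  have hsq1 : (1:ℝ) ≤ Real.sqrt (Real.log (H + Real.exp 1)) := by
    nlinarith [Real.sq_sqrt (by linarith : (0:ℝ) ≤ Real.log (H + Real.exp 1)),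
      Real.sqrt_nonneg (Real.log (H + Real.exp 1)), hlogHe]
  have hsq2 : Real.sqrt (Real.log H) ≤ Real.sqrt (Real.log (H + Real.exp 1)) :=
    Real.sqrt_le_sqrt (Real.log_le_log hH0 (by linarith [Real.exp_pos 1]))
  have e1 : M * (Real.sqrt (2*BB) * Real.sqrt (Real.log H))
      ≤ M * (Real.sqrt (2*BB) * Real.sqrt (Real.log (H + Real.exp 1))) :=
    mul_le_mul_of_nonneg_left
      (mul_le_mul_of_nonneg_left hsq2 (Real.sqrt_nonneg _)) hM.le
  have e2 : 18 * BB + 1 ≤ (18 * BB + 1) * Real.sqrt (Real.log (H + Real.exp 1)) :=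
    le_mul_of_one_le_right (by positivity) hsq1
  have e3 : 2 * BB * (4 * δ ^ ((1/2):ℝ)) ≤ 8 * BB := by nlinarith
  calc ‖∫ y, (ρ y / ‖x - y‖ ^ 2) • (x - y)‖
      ≤ ∫ y : E2, ρ y / ‖x - y‖ := hnormle
    _ ≤ _ := hmono
    _ = H * (2 * BB * δ) + 2 * BB * (4 * δ ^ ((1/2):ℝ)) + 2 * BB * (4 * δ ^ ((1/2):ℝ))
      + (∫ y : E2, ρ y * q3 δ ‖y - x‖) + ∫ y : E2, ρ y := hsplit
    _ ≤ (18 * BB + 1 + Real.sqrt (2 * BB) * M) * Real.sqrt (Real.log (H + Real.exp 1)) := by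
        rw [hδH]
        nlinarith [hCS, hρ1, e1, e2, e3]


theorem field_sup_bound (M : ℝ) (hM : 0 < M) :
    ∃ C > 0, ∀ (ρ : EuclideanSpace ℝ (Fin 2) → ℝ) (H : ℝ)
      (ξ : EuclideanSpace ℝ (Fin 2)),
      1 ≤ H → Measurable ρ → (∀ x, 0 ≤ ρ x) → Integrable ρ →
      (∀ x, ρ x ≤ H + lnm ‖x - ξ‖) →
      (∫ x, ρ x) ≤ 1 → Real.sqrt (∫ x, ρ x ^ 2) ≤ M →
      ∀ x : EuclideanSpace ℝ (Fin 2),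
        ‖∫ y, (ρ y / ‖x - y‖ ^ 2) • (x - y)‖ ≤
          C * Real.sqrt (Real.log (H + Real.exp 1)) :=
  main_bound M hM
end

section
/- Let v : [0,T] → (0,1) be continuously differentiable with v'(t) ≤ 2√a · v(t)(1 − ln v(t)) and v(0) = b ∈ (0,1). Then v(t) ≤ exp(1 − e^{−2t√a}) · b^{exp(−2t√a)} for all t ∈ [0,T]. -/
theorem osgood_first_order (a b T : ℝ) (ha : 0 < a) (hb0 : 0 < b) (hb1 : b < 1)
    (v v' : ℝ → ℝ)
    (hrange : ∀ t ∈ Set.Icc (0:ℝ) T, 0 < v t ∧ v t < 1)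
    (hv0 : v 0 = b)
    (hderiv : ∀ t ∈ Set.Icc (0:ℝ) T, HasDerivAt v (v' t) t)
    (hineq : ∀ t ∈ Set.Icc (0:ℝ) T,
      v' t ≤ 2 * Real.sqrt a * (v t * (1 - Real.log (v t)))) :
    ∀ t ∈ Set.Icc (0:ℝ) T,
      v t ≤ Real.exp (1 - Real.exp (-2 * t * Real.sqrt a)) *
        b ^ Real.exp (-2 * t * Real.sqrt a) := by
  set c := Real.sqrt a with hc
  have hcpos : 0 < c := Real.sqrt_pos.mpr ha
  set g : ℝ → ℝ := fun t => (1 - Real.log (v t)) * Real.exp (2 * c * t) with hg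
  set g' : ℝ → ℝ := fun t =>
    -(v' t / v t) * Real.exp (2 * c * t)
      + (1 - Real.log (v t)) * (Real.exp (2 * c * t) * (2 * c)) with hg'
  have hgderiv : ∀ t ∈ Set.Icc (0:ℝ) T, HasDerivAt g (g' t) t := by
    intro t ht
    have hvpos := (hrange t ht).1
    have hlog : HasDerivAt (fun s => Real.log (v s)) (v' t / v t) t := by
      have := (Real.hasDerivAt_log (ne_of_gt hvpos)).comp t (hderiv t ht)
      simpa [div_eq_inv_mul, mul_comm, Function.comp_def] using this
    have h1 : HasDerivAt (fun s => 1 - Real.log (v s)) (-(v' t / v t)) t := by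
      simpa [Pi.sub_def] using (hasDerivAt_const t (1:ℝ)).sub hlog
    have h2 : HasDerivAt (fun s => Real.exp (2 * c * s)) (Real.exp (2 * c * t) * (2 * c)) t := by
      have hid : HasDerivAt (fun s : ℝ => 2 * c * s) (2 * c) t := by
        simpa using (hasDerivAt_id t).const_mul (2 * c)
      exact (Real.hasDerivAt_exp (2 * c * t)).comp t hid
    simpa [hg, hg', Pi.mul_def] using h1.mul h2
  have hgnonneg : ∀ t ∈ Set.Icc (0:ℝ) T, 0 ≤ g' t := by
    intro t ht
    have hvpos := (hrange t ht).1
    have hdivle : v' t / v t ≤ 2 * c * (1 - Real.log (v t)) := by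
      rw [div_le_iff₀ hvpos]
      calc v' t ≤ 2 * c * (v t * (1 - Real.log (v t))) := hineq t ht
        _ = 2 * c * (1 - Real.log (v t)) * v t := by ring
    have hexp : (0:ℝ) ≤ Real.exp (2 * c * t) := (Real.exp_pos _).le
    have : 0 ≤ (2 * c * (1 - Real.log (v t)) - v' t / v t) * Real.exp (2 * c * t) :=
      mul_nonneg (by linarith) hexp
    simp only [hg']
    nlinarith [this]
  -- g is monotone on Icc 0 T
  have hmono : MonotoneOn g (Set.Icc 0 T) := by
    apply monotoneOn_of_deriv_nonneg (convex_Icc 0 T)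
    · exact fun t ht => (hgderiv t ht).continuousAt.continuousWithinAt
    · intro t ht
      rw [interior_Icc] at ht
      exact ((hgderiv t (Set.mem_Icc_of_Ioo ht)).differentiableAt).differentiableWithinAt
    · intro t ht
      rw [interior_Icc] at ht
      rw [(hgderiv t (Set.mem_Icc_of_Ioo ht)).deriv]
      exact hgnonneg t (Set.mem_Icc_of_Ioo ht)
  intro t ht
  have h0mem : (0:ℝ) ∈ Set.Icc (0:ℝ) T := ⟨le_refl _, ht.1.trans ht.2⟩
  have hkey : g 0 ≤ g t := hmono h0mem ht ht.1
  have hg0 : g 0 = 1 - Real.log b := by simp [hg, hv0]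
  set E := Real.exp (-2 * t * c) with hE
  have hEpos : 0 < E := Real.exp_pos _
  have hEinv : E * Real.exp (2 * c * t) = 1 := by
    rw [hE, ← Real.exp_add]; ring_nf; exact Real.exp_zero
  have h2 : (1 - Real.log b) * E ≤ 1 - Real.log (v t) := by
    have := mul_le_mul_of_nonneg_right hkey hEpos.le
    rw [hg0] at this
    calc (1 - Real.log b) * E = g 0 * E := by rw [hg0]
      _ ≤ g t * E := mul_le_mul_of_nonneg_right hkey hEpos.le
      _ = (1 - Real.log (v t)) * (E * Real.exp (2 * c * t)) := by rw [hg]; ring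
      _ = 1 - Real.log (v t) := by rw [hEinv, mul_one]
  have hlogle : Real.log (v t) ≤ (1 - E) + Real.log b * E := by nlinarith
  have hvpos := (hrange t ht).1
  calc v t = Real.exp (Real.log (v t)) := (Real.exp_log hvpos).symm
    _ ≤ Real.exp ((1 - E) + Real.log b * E) := Real.exp_le_exp.mpr hlogle
    _ = Real.exp (1 - E) * Real.exp (Real.log b * E) := Real.exp_add _ _
    _ = Real.exp (1 - E) * b ^ E := by rw [Real.rpow_def_of_pos hb0]
end
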